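/- Let H = (V,E) be an intersection-closed hypergraph with L(H) ≤ d+1 and ⋂_{e∈E} e = ∅. Then every edge e ∈ E with e ≠ V can be written as M_H(S) for some set S ⊆ V with |S| ≤ d, where M_H(S) is the intersection of all edges of H containing S; moreover S can be chosen so that for any prescribed v ∈ e, v ∈ S. -/

import Mathlib

/-- `M E S` is the intersection of all edges of `E` containing `S`
(equal to `univ` when there is no such edge). -/
def M {α : Type*} (E : Set (Set α)) (S : Set α) : Set α :=
  ⋂₀ { e | e ∈ E ∧ S ⊆ e }

/-- Extending a strict chain by a strictly larger set. -/
lemma snocChain {α : Type*} {k : ℕ} (c : Fin (k+1) → Set α)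
    (hc : ∀ i j, i < j → c i ⊂ c j) (x : Set α) (hx : c (Fin.last k) ⊂ x) :
    ∀ i j : Fin (k+2), i < j → (Fin.snoc c x : Fin (k+2) → Set α) i ⊂ (Fin.snoc c x : Fin (k+2) → Set α) j := by
  intro i j hij
  by_cases hj : j = Fin.last (k+1)
  · subst hj
    have hi : i ≠ Fin.last (k+1) := ne_of_lt hij
    obtain ⟨i', rfl⟩ := Fin.exists_castSucc_eq.mpr hi
    rw [Fin.snoc_castSucc, Fin.snoc_last]
    have hle : c i' ⊆ c (Fin.last k) := by
      rcases eq_or_lt_of_le (Fin.le_last i') with h | h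
      · rw [h]
      · exact (hc i' (Fin.last k) h).subset
    exact ssubset_of_subset_of_ssubset hle hx
  · obtain ⟨j', rfl⟩ := Fin.exists_castSucc_eq.mpr hj
    have hi : i ≠ Fin.last (k+1) := ne_of_lt (lt_of_lt_of_le hij (Fin.le_last _))
    obtain ⟨i', rfl⟩ := Fin.exists_castSucc_eq.mpr hi
    rw [Fin.snoc_castSucc, Fin.snoc_castSucc]
    exact hc i' j' (by exact_mod_cast hij)

theorem stmt_15 {α : Type*} [Fintype α] (E : Set (Set α))
    (hcl : Set.univ ∈ E ∧ ∀ a ∈ E, ∀ b ∈ E, a ∩ b ∈ E)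
    (hred : ⋂₀ E = ∅) (d : ℕ)
    (hL : ∀ (l : ℕ) (c : Fin (l+1) → Set α),
      (∀ i, c i ∈ E) → (∀ i j, i < j → c i ⊂ c j) → l ≤ d+1) :
    ∀ e ∈ E, e ≠ Set.univ →
      (∃ S : Set α, S.ncard ≤ d ∧ M E S = e) ∧
      ∀ v ∈ e, ∃ S : Set α, v ∈ S ∧ S.ncard ≤ d ∧ M E S = e := by
  classical
  obtain ⟨huniv, hinter⟩ := hcl
  -- intersection of a nonempty subfamily is an edge
  have hsInter : ∀ F : Set (Set α), F ⊆ E → F.Nonempty → ⋂₀ F ∈ E := by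
    intro F
    refine Set.Finite.induction_on (motive := fun F _ => F ⊆ E → F.Nonempty → ⋂₀ F ∈ E)
      F (Set.toFinite F) (fun _ (h : (∅ : Set (Set α)).Nonempty) => absurd rfl h.ne_empty) ?_
    intro a s ha hs ih hsub hne
    rw [Set.sInter_insert]
    rcases s.eq_empty_or_nonempty with rfl | hsne
    · simpa using hsub (Set.mem_insert a ∅)
    · exact hinter a (hsub (Set.mem_insert _ _)) _
        (ih (fun f hf => hsub (Set.mem_insert_of_mem _ hf)) hsne)
  have hMmem : ∀ S : Set α, M E S ∈ E := by
    intro S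
    exact hsInter _ (fun f hf => hf.1) ⟨Set.univ, huniv, Set.subset_univ S⟩
  have hsubM : ∀ S : Set α, S ⊆ M E S := by
    intro S x hx
    exact Set.mem_sInter.mpr fun f hf => hf.2 hx
  have hMmono : ∀ S T : Set α, S ⊆ T → M E S ⊆ M E T := by
    intro S T hST
    exact Set.sInter_subset_sInter fun f hf => ⟨hf.1, hST.trans hf.2⟩
  have hMle : ∀ (S f : Set α), f ∈ E → S ⊆ f → M E S ⊆ f := by
    intro S f hf hSf
    exact Set.sInter_subset_of_mem ⟨hf, hSf⟩
  have hempty : (∅ : Set α) ∈ E := by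
    have := hsInter E subset_rfl ⟨_, huniv⟩
    rwa [hred] at this
  -- finishing step: the chain bound gives |S| ≤ d
  have hfin : ∀ (e : Set α), e ≠ Set.univ → ∀ (k : ℕ) (S : Set α), S.ncard ≤ k →
      (∃ c : Fin (k+1) → Set α, (∀ i, c i ∈ E) ∧ (∀ i j, i < j → c i ⊂ c j) ∧
        c (Fin.last k) = M E S) →
      M E S = e → S.ncard ≤ d := by
    intro e hene k S hSk ⟨c, hcE, hcm, hclast⟩ hMe
    have hlast : c (Fin.last k) ⊂ Set.univ := by
      rw [hclast, hMe]; exact Set.ssubset_univ_iff.mpr hene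
    have hk : k + 1 ≤ d + 1 := by
      refine hL (k+1) (Fin.snoc c Set.univ) ?_ (snocChain c hcm _ hlast)
      intro i
      refine Fin.lastCases ?_ ?_ i
      · rw [Fin.snoc_last]; exact huniv
      · intro i'; rw [Fin.snoc_castSucc]; exact hcE i'
    omega
  -- main greedy induction
  have key : ∀ n : ℕ, ∀ e ∈ E, e ≠ Set.univ → ∀ (v : α) (k : ℕ) (S : Set α),
      v ∈ S → S ⊆ e → S.ncard ≤ k →
      (∃ c : Fin (k+1) → Set α, (∀ i, c i ∈ E) ∧ (∀ i j, i < j → c i ⊂ c j) ∧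
        c (Fin.last k) = M E S) →
      (e \ M E S).ncard ≤ n →
      ∃ S' : Set α, v ∈ S' ∧ S'.ncard ≤ d ∧ M E S' = e := by
    intro n
    induction n with
    | zero =>
      intro e he hene v k S hvS hSe hSk hchain hn
      have hMsub : M E S ⊆ e := hMle S e he hSe
      have hMe : M E S = e := by
        by_contra h
        obtain ⟨u, hu⟩ : (e \ M E S).Nonempty :=
          Set.diff_nonempty.mpr fun hle => h (Set.Subset.antisymm hMsub hle)
        have : 0 < (e \ M E S).ncard :=
          Set.ncard_pos (Set.toFinite _) |>.mpr ⟨u, hu⟩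
        omega
      exact ⟨S, hvS, hfin e hene k S hSk hchain hMe, hMe⟩
    | succ n ih =>
      intro e he hene v k S hvS hSe hSk hchain hn
      by_cases hMe : M E S = e
      · exact ⟨S, hvS, hfin e hene k S hSk hchain hMe, hMe⟩
      · obtain ⟨c, hcE, hcm, hclast⟩ := hchain
        have hMsub : M E S ⊆ e := hMle S e he hSe
        obtain ⟨u, hu⟩ : (e \ M E S).Nonempty :=
          Set.diff_nonempty.mpr fun hle => hMe (Set.Subset.antisymm hMsub hle)
        set S' := insert u S with hS'
        have huM : u ∈ M E S' := hsubM S' (Set.mem_insert u S)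
        have hMS' : M E S ⊂ M E S' :=
          (Set.ssubset_iff_of_subset (hMmono S S' (Set.subset_insert u S))).mpr
            ⟨u, huM, hu.2⟩
        have hmeas : (e \ M E S').ncard ≤ n := by
          have hss : e \ M E S' ⊂ e \ M E S := by
            refine (Set.ssubset_iff_of_subset
              (Set.diff_subset_diff_right hMS'.subset)).mpr ⟨u, hu, ?_⟩
            simp [huM]
          have := Set.ncard_lt_ncard hss (Set.toFinite _)
          omega
        refine ih e he hene v (k+1) S' (Set.mem_insert_of_mem u hvS)
          (Set.insert_subset hu.1 hSe)
          (le_trans (Set.ncard_insert_le u S) (by omega))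
          ⟨Fin.snoc c (M E S'), ?_, ?_, ?_⟩ hmeas
        · intro i
          refine Fin.lastCases ?_ ?_ i
          · rw [Fin.snoc_last]; exact hMmem S'
          · intro i'; rw [Fin.snoc_castSucc]; exact hcE i'
        · exact snocChain c hcm _ (by rw [hclast]; exact hMS')
        · rw [Fin.snoc_last]
  intro e he hene
  have part2 : ∀ v ∈ e, ∃ S : Set α, v ∈ S ∧ S.ncard ≤ d ∧ M E S = e := by
    intro v hv
    have hvM : v ∈ M E {v} := hsubM {v} rfl
    refine key ((e \ M E {v}).ncard) e he hene v 1 {v} rfl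
      (Set.singleton_subset_iff.mpr hv) (by simp)
      ⟨Fin.snoc (fun _ => (∅ : Set α)) (M E {v}), ?_, ?_, ?_⟩ le_rfl
    · intro i
      refine Fin.lastCases ?_ ?_ i
      · rw [Fin.snoc_last]; exact hMmem {v}
      · intro i'; rw [Fin.snoc_castSucc]; exact hempty
    · refine snocChain _ (fun i j h => absurd (Fin.lt_iff_val_lt_val.mp h) (by omega)) _ ?_
      exact Set.empty_ssubset.mpr ⟨v, hvM⟩
    · rw [Fin.snoc_last]
  refine ⟨?_, part2⟩
  rcases e.eq_empty_or_nonempty with rfl | ⟨v, hv⟩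
  · refine ⟨∅, by simp, ?_⟩
    have h1 : {f | f ∈ E ∧ (∅ : Set α) ⊆ f} = E := by ext f; simp
    rw [M, h1, hred]
  · obtain ⟨S, _, hS⟩ := part2 v hv
    exact ⟨S, hS⟩
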